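/- The set G_u^{(1)} := { (D, m, E) ∈ R × R^2 × R : D > 0, E - sqrt(D^2 + ‖m‖^2) > 0 } coincides with the set G_u^{(2)} := { (D, m, E) : D > 0 and for all v* ∈ R^2 with ‖v*‖ < 1, E - ⟨m, v*⟩ - D·sqrt(1 - ‖v*‖^2) > 0 }. -/
import Mathlib


open scoped RealInnerProductSpace

/-- Equivalence of the admissible state set `G_u^{(1)}` with the set `G_u^{(2)}` defined by a
family of linear constraints. Here a state is `(D, m, E) ∈ ℝ × ℝ² × ℝ`. -/
theorem Gu1_eq_Gu2 :
    {U : ℝ × EuclideanSpace ℝ (Fin 2) × ℝ |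
        0 < U.1 ∧ 0 < U.2.2 - Real.sqrt (U.1 ^ 2 + ‖U.2.1‖ ^ 2)} =
    {U : ℝ × EuclideanSpace ℝ (Fin 2) × ℝ |
        0 < U.1 ∧ ∀ v : EuclideanSpace ℝ (Fin 2), ‖v‖ < 1 →
          0 < U.2.2 - ⟪U.2.1, v⟫ - U.1 * Real.sqrt (1 - ‖v‖ ^ 2)} := by
  ext ⟨D, m, E⟩
  simp only [Set.mem_setOf_eq]
  constructor
  · rintro ⟨hD, hE⟩
    refine ⟨hD, fun v hv => ?_⟩
    set S := Real.sqrt (D ^ 2 + ‖m‖ ^ 2) with hSdef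
    have hSnn : (0:ℝ) ≤ S := Real.sqrt_nonneg _
    have hS2 : S ^ 2 = D ^ 2 + ‖m‖ ^ 2 := by
      rw [hSdef, Real.sq_sqrt]; positivity
    set w := Real.sqrt (1 - ‖v‖ ^ 2) with hwdef
    have hwnn : (0:ℝ) ≤ w := Real.sqrt_nonneg _
    have hw2 : w ^ 2 = 1 - ‖v‖ ^ 2 := by
      rw [hwdef, Real.sq_sqrt]; nlinarith [norm_nonneg v]
    have hcs : ⟪m, v⟫ ≤ ‖m‖ * ‖v‖ := real_inner_le_norm m v
    have key : ‖m‖ * ‖v‖ + D * w ≤ S := by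
      nlinarith [sq_nonneg (‖m‖ * w - D * ‖v‖), norm_nonneg m, norm_nonneg v,
        sq_nonneg (‖m‖ * ‖v‖ + D * w - S)]
    nlinarith
  · rintro ⟨hD, h⟩
    refine ⟨hD, ?_⟩
    set S := Real.sqrt (D ^ 2 + ‖m‖ ^ 2) with hSdef
    have hSpos : (0:ℝ) < S := Real.sqrt_pos.mpr (by positivity)
    have hS2 : S ^ 2 = D ^ 2 + ‖m‖ ^ 2 := by
      rw [hSdef, Real.sq_sqrt]; positivity
    set v : EuclideanSpace ℝ (Fin 2) := S⁻¹ • m with hvdef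
    have hnv : ‖v‖ = ‖m‖ / S := by
      rw [hvdef, norm_smul, Real.norm_eq_abs, abs_inv, abs_of_pos hSpos]
      ring
    have hvlt : ‖v‖ < 1 := by
      rw [hnv, div_lt_one hSpos]
      nlinarith [norm_nonneg m]
    have hinner : ⟪m, v⟫ = S⁻¹ * ‖m‖ ^ 2 := by
      rw [hvdef, real_inner_smul_right, real_inner_self_eq_norm_sq]
    have hsqrt : Real.sqrt (1 - ‖v‖ ^ 2) = D / S := by
      have : 1 - ‖v‖ ^ 2 = (D / S) ^ 2 := by
        rw [hnv]; field_simp; nlinarith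
      rw [this, Real.sqrt_sq (by positivity)]
    have := h v hvlt
    rw [hinner, hsqrt] at this
    have heq : S⁻¹ * ‖m‖ ^ 2 + D * (D / S) = S := by
      field_simp; nlinarith
    nlinarith
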